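/- The function f(b) = (b/6)(3 + 2b·ln b − b − b²) + ((1−b)/6)(1 + 2b·ln b − b²) on (0,1) has a critical point exactly where ln b = 2(b − 1), and this equation has a unique solution in (0,1). -/

import Mathlib

open Real Set

noncomputable def gAux : ℝ → ℝ := fun b => Real.log b - 2 * (b - 1)

lemma gAux_hasDeriv {x : ℝ} (hx : 0 < x) :
    HasDerivAt gAux (x⁻¹ - 2) x := by
  have h1 := Real.hasDerivAt_log hx.ne'
  have h2 : HasDerivAt (fun b : ℝ => 2 * (b - 1)) 2 x := by
    simpa using (((hasDerivAt_id x).sub_const 1).const_mul 2)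
  exact h1.sub h2

lemma gAux_cont : ContinuousOn gAux (Set.Ioi (0:ℝ)) := by
  apply ContinuousOn.sub
  · exact Real.continuousOn_log.mono (by intro x hx; simpa using (ne_of_gt hx))
  · fun_prop

lemma gAux_mono : StrictMonoOn gAux (Set.Ioc (0:ℝ) (1/2)) := by
  apply strictMonoOn_of_deriv_pos (convex_Ioc _ _)
  · exact gAux_cont.mono (fun x hx => hx.1)
  · intro x hx
    rw [interior_Ioc] at hx
    rw [(gAux_hasDeriv hx.1).deriv]
    have : (2:ℝ) < x⁻¹ := by
      rw [lt_inv_comm₀ (by norm_num) hx.1]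
      linarith [hx.2]
    linarith

lemma gAux_anti : StrictAntiOn gAux (Set.Icc (1/2:ℝ) 1) := by
  apply strictAntiOn_of_deriv_neg (convex_Icc _ _)
  · exact gAux_cont.mono (fun x hx => by simp at hx ⊢; linarith [hx.1])
  · intro x hx
    rw [interior_Icc] at hx
    have hx0 : (0:ℝ) < x := by linarith [hx.1]
    rw [(gAux_hasDeriv hx0).deriv]
    have : x⁻¹ < 2 := by
      rw [inv_lt_comm₀ hx0 (by norm_num)]
      linarith [hx.1]
    linarith

lemma gAux_exists : ∃ b ∈ Set.Ioo (0:ℝ) 1, gAux b = 0 := by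
  have he2 : Real.exp (-2) < 1/2 := by
    rw [Real.exp_neg]
    have h3 : (3:ℝ) ≤ Real.exp 2 := by
      have := Real.add_one_le_exp (2:ℝ); linarith
    rw [inv_lt_comm₀ (by positivity) (by norm_num)]
    linarith
  have hga : gAux (Real.exp (-2)) < 0 := by
    simp [gAux, Real.log_exp]
    nlinarith [Real.exp_pos (-2:ℝ)]
  have hgb : 0 < gAux (1/2 : ℝ) := by
    simp [gAux]
    linarith [Real.log_two_lt_d9]
  have hcont : ContinuousOn gAux (Set.Icc (Real.exp (-2)) (1/2)) :=
    gAux_cont.mono (fun x hx => lt_of_lt_of_le (Real.exp_pos _) hx.1)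
  obtain ⟨c, hc, hc0⟩ := intermediate_value_Icc he2.le hcont
    (Set.mem_Icc.mpr ⟨hga.le, hgb.le⟩)
  refine ⟨c, ⟨lt_of_lt_of_le (Real.exp_pos _) hc.1, ?_⟩, hc0⟩
  have : c ≤ 1/2 := hc.2
  linarith

lemma gAux_root_le {b : ℝ} (hb : b ∈ Set.Ioo (0:ℝ) 1) (h : gAux b = 0) :
    b ≤ 1/2 := by
  by_contra hlt
  push_neg at hlt
  have h1 : gAux 1 = 0 := by simp [gAux]
  have := gAux_anti ⟨hlt.le, hb.2.le⟩ ⟨by norm_num, le_refl 1⟩ hb.2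
  rw [h, h1] at this
  exact lt_irrefl 0 this

theorem stmt_16 (f : ℝ → ℝ)
    (hf : ∀ b, f b = (b / 6) * (3 + 2 * b * Real.log b - b - b ^ 2) +
      ((1 - b) / 6) * (1 + 2 * b * Real.log b - b ^ 2)) :
    (∀ b ∈ Set.Ioo (0 : ℝ) 1, deriv f b = 0 ↔ Real.log b = 2 * (b - 1)) ∧
      (∃! b, b ∈ Set.Ioo (0 : ℝ) 1 ∧ Real.log b = 2 * (b - 1)) := by
  have hfF : f = fun b => (1 + 2*b + 2*(b*Real.log b) - 2*b^2)/6 := by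
    funext b; rw [hf]; ring
  constructor
  · intro b hb
    have hD : HasDerivAt f ((Real.log b - 2*(b-1))/3) b := by
      rw [hfF]
      have h1 : HasDerivAt (fun x : ℝ => (1 + 2*x + 2*(x*Real.log x) - 2*x^2)/6)
          ((0 + 2*1 + 2*(Real.log b + 1) - 2*(2*b^1))/6) b := by
        exact ((((hasDerivAt_const b (1:ℝ)).add ((hasDerivAt_id b).const_mul 2)).add
          ((Real.hasDerivAt_mul_log hb.1.ne').const_mul 2)).sub
          ((hasDerivAt_pow 2 b).const_mul 2)).div_const 6
      convert h1 using 1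
      ring
    rw [hD.deriv]
    constructor
    · intro h; have : Real.log b - 2*(b-1) = 0 := by
        field_simp at h; linarith
      linarith
    · intro h; rw [h]; ring
  · obtain ⟨c, hc, hc0⟩ := gAux_exists
    refine ⟨c, ⟨hc, by have := hc0; simp [gAux] at this; linarith⟩, ?_⟩
    intro y ⟨hy, hy0⟩
    have hgy : gAux y = 0 := by simp [gAux]; linarith
    exact gAux_mono.injOn ⟨hy.1, gAux_root_le hy hgy⟩
      ⟨hc.1, gAux_root_le hc hc0⟩ (by rw [hgy, hc0])
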